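/- Let ν > 0, c > 0, u₀ ∈ (0,1), δ > 0 and α > 0 be real. Let r : (u₀, u₀+δ) → (0,1) be continuous with lim_{u→u₀⁺} (1−r(u))/(u−u₀) = α. Let ξ₂ ∈ ℝ, η > 0, and let u : (ξ₂−η, ξ₂) → (u₀, u₀+δ) be differentiable with u'(ξ) = −(c/ν)·r(u(ξ))·u(ξ)/√(1−r(u(ξ))²) for all ξ, and lim_{ξ→ξ₂⁻} u(ξ) = u₀. Then lim_{ξ→ξ₂⁻} (u(ξ)−u₀)^{1/2}·|u'(ξ)| = c·u₀/(√(2α)·ν) and lim_{ξ→ξ₂⁻} (u(ξ)−u₀)/(ξ₂−ξ)^{2/3} = (3·c·u₀/(2·√(2α)·ν))^{2/3}. -/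

import Mathlib

/-- Power-law behavior of a traveling-wave profile at the left of an entropic
jump at `ξ₂`: if `u' = -(c/ν)·r(u)·u/√(1-r(u)²)`, `u → u₀` as `ξ → ξ₂⁻`, and
the orbit touches `r = 1` at `u₀` with normalized slope `α`
(`(1-r(u))/(u-u₀) → α` as `u → u₀⁺`), then
`√(u(ξ)-u₀)·|u'(ξ)| → c·u₀/(√(2α)·ν)` and
`(u(ξ)-u₀)/(ξ₂-ξ)^{2/3} → (3·c·u₀/(2·√(2α)·ν))^{2/3}` as `ξ → ξ₂⁻`. -/
theorem stmt11 (ν c u₀ δ α : ℝ) (hν : 0 < ν) (hc : 0 < c)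
    (hu₀ : u₀ ∈ Set.Ioo (0:ℝ) 1) (hδ : 0 < δ) (hα : 0 < α)
    (r : ℝ → ℝ) (hrc : ContinuousOn r (Set.Ioo u₀ (u₀ + δ)))
    (hrmem : ∀ v ∈ Set.Ioo u₀ (u₀ + δ), r v ∈ Set.Ioo (0:ℝ) 1)
    (hslope : Filter.Tendsto (fun v => (1 - r v) / (v - u₀))
      (nhdsWithin u₀ (Set.Ioo u₀ (u₀ + δ))) (nhds α))
    (ξ₂ η : ℝ) (hη : 0 < η)
    (u : ℝ → ℝ)
    (humem : ∀ ξ ∈ Set.Ioo (ξ₂ - η) ξ₂, u ξ ∈ Set.Ioo u₀ (u₀ + δ))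
    (hode : ∀ ξ ∈ Set.Ioo (ξ₂ - η) ξ₂,
      HasDerivAt u (-(c / ν) * r (u ξ) * u ξ / Real.sqrt (1 - (r (u ξ)) ^ 2)) ξ)
    (hlim : Filter.Tendsto u (nhdsWithin ξ₂ (Set.Ioo (ξ₂ - η) ξ₂)) (nhds u₀)) :
    Filter.Tendsto (fun ξ => Real.sqrt (u ξ - u₀) * |deriv u ξ|)
      (nhdsWithin ξ₂ (Set.Ioo (ξ₂ - η) ξ₂))
      (nhds (c * u₀ / (Real.sqrt (2 * α) * ν))) ∧
    Filter.Tendsto (fun ξ => (u ξ - u₀) / (ξ₂ - ξ) ^ ((2:ℝ) / 3))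
      (nhdsWithin ξ₂ (Set.Ioo (ξ₂ - η) ξ₂))
      (nhds ((3 * c * u₀ / (2 * Real.sqrt (2 * α) * ν)) ^ ((2:ℝ) / 3))) := by
  obtain ⟨hu₀0, hu₀1⟩ := hu₀
  have hsqα : 0 < Real.sqrt (2 * α) := Real.sqrt_pos.mpr (by linarith)
  -- the filter is the left-neighborhood filter
  have hlfilter : nhdsWithin ξ₂ (Set.Ioo (ξ₂ - η) ξ₂) = nhdsWithin ξ₂ (Set.Iio ξ₂) :=
    nhdsWithin_Ioo_eq_nhdsLT (by linarith)
  -- u tends to u₀ within the domain of r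
  have huS : Filter.Tendsto u (nhdsWithin ξ₂ (Set.Ioo (ξ₂ - η) ξ₂))
      (nhdsWithin u₀ (Set.Ioo u₀ (u₀ + δ))) := by
    rw [tendsto_nhdsWithin_iff]
    exact ⟨hlim, by filter_upwards [self_mem_nhdsWithin] with ξ hξ using humem ξ hξ⟩
  have hsub : Filter.Tendsto (fun v => v - u₀) (nhdsWithin u₀ (Set.Ioo u₀ (u₀ + δ)))
      (nhds 0) := by
    have := (continuous_id.sub (continuous_const (y := u₀))).tendsto u₀
    simpa [Pi.sub_def] using this.mono_left nhdsWithin_le_nhds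
  -- r tends to 1
  have hr1 : Filter.Tendsto r (nhdsWithin u₀ (Set.Ioo u₀ (u₀ + δ))) (nhds 1) := by
    have h1 : Filter.Tendsto (fun v => 1 - (1 - r v) / (v - u₀) * (v - u₀))
        (nhdsWithin u₀ (Set.Ioo u₀ (u₀ + δ))) (nhds 1) := by
      have := (tendsto_const_nhds (x := (1:ℝ))).sub (hslope.mul hsub)
      simpa using this
    refine h1.congr' ?_
    filter_upwards [self_mem_nhdsWithin] with v hv
    have : v - u₀ ≠ 0 := by have := hv.1; intro h; linarith [sub_eq_zero.mp h]
    field_simp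
    ring
  -- the key limit for √(v-u₀) · |u'|
  have hA : Filter.Tendsto
      (fun v => Real.sqrt (v - u₀) * (c / ν * r v * v / Real.sqrt (1 - r v ^ 2)))
      (nhdsWithin u₀ (Set.Ioo u₀ (u₀ + δ)))
      (nhds (c * u₀ / (Real.sqrt (2 * α) * ν))) := by
    have hq : Filter.Tendsto (fun v => (1 - r v) / (v - u₀) * (1 + r v))
        (nhdsWithin u₀ (Set.Ioo u₀ (u₀ + δ))) (nhds (2 * α)) := by
      have := hslope.mul ((tendsto_const_nhds (x := (1:ℝ))).add hr1)
      convert this using 2; ring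
    have hid : Filter.Tendsto (fun v : ℝ => v) (nhdsWithin u₀ (Set.Ioo u₀ (u₀ + δ)))
        (nhds u₀) := Filter.tendsto_id.mono_left nhdsWithin_le_nhds
    have hnum : Filter.Tendsto (fun v => c / ν * r v * v)
        (nhdsWithin u₀ (Set.Ioo u₀ (u₀ + δ))) (nhds (c / ν * 1 * u₀)) :=
      ((tendsto_const_nhds.mul hr1).mul hid)
    have hden : Filter.Tendsto (fun v => Real.sqrt ((1 - r v) / (v - u₀) * (1 + r v)))
        (nhdsWithin u₀ (Set.Ioo u₀ (u₀ + δ))) (nhds (Real.sqrt (2 * α))) :=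
      (Real.continuous_sqrt.tendsto _).comp hq
    have hlim2 := hnum.div hden hsqα.ne'
    have heq : c / ν * 1 * u₀ / Real.sqrt (2 * α) = c * u₀ / (Real.sqrt (2 * α) * ν) := by
      field_simp
    rw [heq] at hlim2
    refine hlim2.congr' ?_
    filter_upwards [self_mem_nhdsWithin] with v hv
    have hv1 : u₀ < v := hv.1
    have hvpos : 0 < v - u₀ := by linarith
    obtain ⟨hr0, hrlt⟩ := hrmem v hv
    have hr2 : 0 < 1 - r v ^ 2 := by nlinarith
    have hsq1 : 0 < Real.sqrt (1 - r v ^ 2) := Real.sqrt_pos.mpr hr2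
    have hsq2 : 0 < Real.sqrt (v - u₀) := Real.sqrt_pos.mpr hvpos
    have hqeq : (1 - r v) / (v - u₀) * (1 + r v) = (1 - r v ^ 2) / (v - u₀) := by
      field_simp; ring
    simp only [Pi.div_apply]
    rw [hqeq, Real.sqrt_div hr2.le]
    rw [eq_comm]
    field_simp
  -- the derivative expression is negative, with absolute value P ∘ u
  have habs : ∀ ξ ∈ Set.Ioo (ξ₂ - η) ξ₂,
      |deriv u ξ| = c / ν * r (u ξ) * u ξ / Real.sqrt (1 - r (u ξ) ^ 2) := by
    intro ξ hξ
    obtain ⟨hr0, hrlt⟩ := hrmem _ (humem ξ hξ)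
    have hupos : 0 < u ξ := lt_trans hu₀0 (humem ξ hξ).1
    have hr2 : 0 < 1 - r (u ξ) ^ 2 := by nlinarith
    have hsq1 : 0 < Real.sqrt (1 - r (u ξ) ^ 2) := Real.sqrt_pos.mpr hr2
    have hP : 0 < c / ν * r (u ξ) * u ξ / Real.sqrt (1 - r (u ξ) ^ 2) := by positivity
    rw [(hode ξ hξ).deriv]
    have : -(c / ν) * r (u ξ) * u ξ / Real.sqrt (1 - r (u ξ) ^ 2)
        = -(c / ν * r (u ξ) * u ξ / Real.sqrt (1 - r (u ξ) ^ 2)) := by ring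
    rw [this, abs_neg, abs_of_pos hP]
  -- part 1
  have part1 : Filter.Tendsto (fun ξ => Real.sqrt (u ξ - u₀) * |deriv u ξ|)
      (nhdsWithin ξ₂ (Set.Ioo (ξ₂ - η) ξ₂))
      (nhds (c * u₀ / (Real.sqrt (2 * α) * ν))) := by
    refine (hA.comp huS).congr' ?_
    filter_upwards [self_mem_nhdsWithin] with ξ hξ
    simp only [Function.comp]
    rw [habs ξ hξ]
  refine ⟨part1, ?_⟩
  -- part 2 : L'Hopital for f = (u-u₀)^{3/2}, g = ξ₂ - ξ
  have hTmem : Set.Ioo (ξ₂ - η) ξ₂ ∈ nhdsWithin ξ₂ (Set.Iio ξ₂) :=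
    hlfilter ▸ self_mem_nhdsWithin
  set f : ℝ → ℝ := fun ξ => (u ξ - u₀) * Real.sqrt (u ξ - u₀) with hf
  set f' : ℝ → ℝ := fun ξ =>
    3 / 2 * Real.sqrt (u ξ - u₀) *
      (-(c / ν) * r (u ξ) * u ξ / Real.sqrt (1 - r (u ξ) ^ 2)) with hf'
  have hff' : ∀ ξ ∈ Set.Ioo (ξ₂ - η) ξ₂, HasDerivAt f (f' ξ) ξ := by
    intro ξ hξ
    have hvpos : 0 < u ξ - u₀ := by have := (humem ξ hξ).1; linarith
    have hsq2 : 0 < Real.sqrt (u ξ - u₀) := Real.sqrt_pos.mpr hvpos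
    have hu' := hode ξ hξ
    have hsub' : HasDerivAt (fun ξ => u ξ - u₀)
        (-(c / ν) * r (u ξ) * u ξ / Real.sqrt (1 - r (u ξ) ^ 2)) ξ := hu'.sub_const u₀
    have hsqrt : HasDerivAt (fun ξ => Real.sqrt (u ξ - u₀))
        (1 / (2 * Real.sqrt (u ξ - u₀)) *
          (-(c / ν) * r (u ξ) * u ξ / Real.sqrt (1 - r (u ξ) ^ 2))) ξ :=
      (Real.hasDerivAt_sqrt hvpos.ne').comp ξ hsub'
    have hmul : HasDerivAt f _ ξ := hsub'.mul hsqrt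
    convert hmul using 1
    have hss : Real.sqrt (u ξ - u₀) * Real.sqrt (u ξ - u₀) = u ξ - u₀ :=
      Real.mul_self_sqrt hvpos.le
    have ht : Real.sqrt (u ξ - u₀) ≠ 0 := hsq2.ne'
    obtain ⟨hr0, hrlt⟩ := hrmem _ (humem ξ hξ)
    have hr2 : 0 < 1 - r (u ξ) ^ 2 := by nlinarith
    have hsq1 : Real.sqrt (1 - r (u ξ) ^ 2) ≠ 0 := (Real.sqrt_pos.mpr hr2).ne'
    have hν' : ν ≠ 0 := hν.ne'
    simp only [hf']
    field_simp
    linear_combination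
      (-u ξ) * hss
  have hgg' : ∀ ξ : ℝ, HasDerivAt (fun ξ => ξ₂ - ξ) (-1 : ℝ) ξ := fun ξ => by
    simpa using (hasDerivAt_id ξ).const_sub ξ₂
  have hfa : Filter.Tendsto f (nhdsWithin ξ₂ (Set.Iio ξ₂)) (nhds 0) := by
    have hc0 : Filter.Tendsto (fun v : ℝ => (v - u₀) * Real.sqrt (v - u₀)) (nhds u₀)
        (nhds 0) := by
      have : Continuous fun v : ℝ => (v - u₀) * Real.sqrt (v - u₀) :=
        (continuous_id.sub continuous_const).mul
          (Real.continuous_sqrt.comp (continuous_id.sub continuous_const))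
      simpa using this.tendsto u₀
    exact hc0.comp (hlfilter ▸ hlim)
  have hga : Filter.Tendsto (fun ξ => ξ₂ - ξ) (nhdsWithin ξ₂ (Set.Iio ξ₂)) (nhds 0) := by
    have : Continuous fun ξ : ℝ => ξ₂ - ξ := continuous_const.sub continuous_id
    have h := this.tendsto ξ₂
    simp only [sub_self] at h
    exact h.mono_left nhdsWithin_le_nhds
  have hdiv : Filter.Tendsto (fun ξ => f' ξ / (-1 : ℝ)) (nhdsWithin ξ₂ (Set.Iio ξ₂))
      (nhds (3 * c * u₀ / (2 * Real.sqrt (2 * α) * ν))) := by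
    have h32 := part1.const_mul (3 / 2 : ℝ)
    rw [hlfilter] at h32
    have hval : (3 / 2 : ℝ) * (c * u₀ / (Real.sqrt (2 * α) * ν))
        = 3 * c * u₀ / (2 * Real.sqrt (2 * α) * ν) := by
      field_simp
    rw [hval] at h32
    refine h32.congr' ?_
    filter_upwards [hTmem] with ξ hξ
    rw [habs ξ hξ]
    simp only [hf']
    ring
  have hLH : Filter.Tendsto (fun ξ => f ξ / (ξ₂ - ξ)) (nhdsWithin ξ₂ (Set.Iio ξ₂))
      (nhds (3 * c * u₀ / (2 * Real.sqrt (2 * α) * ν))) := by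
    refine HasDerivAt.lhopital_zero_nhdsLT ?_ ?_ ?_ hfa hga hdiv
    · filter_upwards [hTmem] with ξ hξ using hff' ξ hξ
    · filter_upwards with ξ using hgg' ξ
    · filter_upwards with ξ using by norm_num
  have hK : 0 < 3 * c * u₀ / (2 * Real.sqrt (2 * α) * ν) := by positivity
  have hrpow : Filter.Tendsto (fun ξ => (f ξ / (ξ₂ - ξ)) ^ ((2:ℝ) / 3))
      (nhdsWithin ξ₂ (Set.Iio ξ₂))
      (nhds ((3 * c * u₀ / (2 * Real.sqrt (2 * α) * ν)) ^ ((2:ℝ) / 3))) :=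
    ((Real.continuousAt_rpow_const _ _ (Or.inl hK.ne')).tendsto).comp hLH
  rw [hlfilter]
  refine hrpow.congr' ?_
  filter_upwards [hTmem] with ξ hξ
  have hvpos : 0 < u ξ - u₀ := by have := (humem ξ hξ).1; linarith
  have htpos : 0 < ξ₂ - ξ := by have := hξ.2; linarith
  have hfpos : 0 ≤ f ξ := by
    rw [hf]; positivity
  simp only [hf]
  rw [Real.div_rpow (by positivity) htpos.le]
  congr 1
  rw [Real.sqrt_eq_rpow]
  rw [show (u ξ - u₀) * (u ξ - u₀) ^ ((1:ℝ)/2) = (u ξ - u₀) ^ ((3:ℝ)/2) by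
    nth_rewrite 1 [← Real.rpow_one (u ξ - u₀)]
    rw [← Real.rpow_add hvpos]; norm_num]
  rw [← Real.rpow_mul hvpos.le]
  norm_num
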